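/- Let p be a nonzero Laurent polynomial in z₁,…,z_d over ℂ, let 𝒮 be a collection of proper subsets of W with constants C_X ∈ ℂ, let 𝒫̃(z,λ) = ∏_{n∈W}(p(μ_n⊙z) − λ) + Σ_{X∈𝒮} C_X ∏_{n∈X}(p(μ_n⊙z) − λ) be invariant (𝒫̃(μ_n⊙z,λ) = 𝒫̃(z,λ) for all n ∈ W), and let 𝒫(w,λ) be a Laurent polynomial with 𝒫(z₁^{q₁},…,z_d^{q_d},λ) = 𝒫̃(z,λ). For j = 1,…,d define γ_j ≥ 0 by: −γ_j is the lowest exponent of z_j occurring in p if that exponent is negative, and γ_j = 0 otherwise (note γ_j Q/q_j ∈ ℤ). Then ℛ(w,λ̃) := λ̃^Q · w₁^{γ₁Q/q₁}⋯w_d^{γ_dQ/q_d} · 𝒫(w,λ̃^{−1}) is an ordinary polynomial in ℂ[w₁,…,w_d,λ̃], λ̃ does not divide ℛ, and for each 1 ≤ j ≤ d the variable w_j does not divide ℛ. -/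

import Mathlib

open scoped BigOperators
open Complex

noncomputable section

/-- Laurent polynomials in `z₁,…,z_d` over `ℂ`, encoded as the group algebra of `ℤ^d`. -/
abbrev LMv (d : ℕ) : Type := AddMonoidAlgebra ℂ (Fin d →₀ ℤ)

/-- Laurent polynomials in `z₁,…,z_d` and `λ` over `ℂ`. -/
abbrev LMvF (d : ℕ) : Type := AddMonoidAlgebra ℂ ((Fin d →₀ ℤ) × ℤ)

/-- `e^{2πin/q}`. -/
def muC (q : ℕ) (n : ℤ) : ℂ := Complex.exp (2 * Real.pi * Complex.I * n / q)

/-- The vector `μ_n = (e^{2πin₁/q₁},…,e^{2πin_d/q_d})`. -/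
def muV {d : ℕ} (q : Fin d → ℕ) (n : Fin d → ℤ) : Fin d → ℂ := fun j => muC (q j) (n j)

/-- Substitution `z_j ↦ c_j z_j` in a Laurent polynomial in `z`. -/
def scaleZ {d : ℕ} (c : Fin d → ℂ) (p : LMv d) : LMv d :=
  AddMonoidAlgebra.ofCoeff (Finsupp.sum p.coeff fun α a => Finsupp.single α ((∏ j, c j ^ (α j)) * a))

/-- Substitution `z_j ↦ c_j z_j` in a Laurent polynomial in `(z, λ)` (leaving `λ` alone). -/
def scaleZF {d : ℕ} (c : Fin d → ℂ) (P : LMvF d) : LMvF d :=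
  AddMonoidAlgebra.ofCoeff (Finsupp.sum P.coeff fun β a => Finsupp.single β ((∏ j, c j ^ (β.1 j)) * a))

/-- Total degree `α₁ + ⋯ + α_d` of a monomial exponent. -/
def degS {d : ℕ} (α : Fin d →₀ ℤ) : ℤ := ∑ j, α j

/-- `L₋`, the minimal total degree of a (nonzero) Laurent polynomial. -/
def lowDeg {d : ℕ} (p : LMv d) : ℤ := WithTop.untopD 0 ((Finsupp.support p.coeff).image degS).min

/-- The lowest degree component of a Laurent polynomial. -/
def lowComp {d : ℕ} (p : LMv d) : LMv d :=
  AddMonoidAlgebra.ofCoeff (Finsupp.filter (fun α => degS α = lowDeg p) p.coeff)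

/-- The fundamental cell `W = {n ∈ ℤ^d : 0 ≤ n_j ≤ q_j - 1}`. -/
def Wcell {d : ℕ} (q : Fin d → ℕ) : Finset (Fin d → ℤ) :=
  Fintype.piFinset fun j => (Finset.range (q j)).image (fun k : ℕ => (k : ℤ))

/-- The canonical embedding of Laurent polynomials in `z` into Laurent polynomials in `(z,λ)`. -/
def embedZ {d : ℕ} (p : LMv d) : LMvF d := AddMonoidAlgebra.ofCoeff (Finsupp.mapDomain (fun α => (α, (0:ℤ))) p.coeff)

/-- The variable `λ`. -/
def lamF (d : ℕ) : LMvF d := AddMonoidAlgebra.ofCoeff (Finsupp.single ((0 : Fin d →₀ ℤ), (1:ℤ)) (1:ℂ))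

/-- Exponent stretching `α ↦ (q₁α₁,…,q_dα_d)`. -/
def stretchE {d : ℕ} (q : Fin d → ℕ) (α : Fin d →₀ ℤ) : Fin d →₀ ℤ :=
  Finsupp.sum α fun j a => Finsupp.single j ((q j : ℤ) * a)

/-- The substitution `𝒫(w,λ) ↦ 𝒫(z₁^{q₁},…,z_d^{q_d},λ)`. -/
def stretchF {d : ℕ} (q : Fin d → ℕ) (P : LMvF d) : LMvF d :=
  AddMonoidAlgebra.ofCoeff (Finsupp.mapDomain (fun β => (stretchE q β.1, β.2)) P.coeff)

/-- Assumption (A₂): the Laurent polynomials `h(μ_n ⊙ z)`, `n ∈ W`, are pairwise distinct. -/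
def PairwiseDistinctH {d : ℕ} (q : Fin d → ℕ) (h : LMv d) : Prop :=
  ∀ n ∈ Wcell q, ∀ n' ∈ Wcell q, n ≠ n' → scaleZ (muV q n) h ≠ scaleZ (muV q n') h

/-- The polynomial `𝒫̃(z,λ) = ∏_{n∈W}(p(μ_n⊙z) − λ) + Σ_{X∈𝒮} C_X ∏_{n∈X}(p(μ_n⊙z) − λ)`. -/
def Ptilde {d : ℕ} (q : Fin d → ℕ) (p : LMv d)
    (S : Finset (Finset (Fin d → ℤ))) (C : Finset (Fin d → ℤ) → ℂ) : LMvF d :=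
  (∏ n ∈ Wcell q, (embedZ (scaleZ (muV q n) p) - lamF d))
    + ∑ X ∈ S, C X • ∏ n ∈ X, (embedZ (scaleZ (muV q n) p) - lamF d)
/-- The symbol `p(z) = Σ_n a_n z^{-n}` of a finite-range Toeplitz operator. -/
def symbA {d : ℕ} (a : (Fin d → ℤ) →₀ ℂ) : LMv d :=
  Finsupp.sum a fun n c => AddMonoidAlgebra.ofCoeff (Finsupp.single (-(Finsupp.equivFunOnFinite.symm n)) c)

/-- `V` is `q`-periodic. -/
def IsPeriodic {d : ℕ} (q : Fin d → ℕ) (V : (Fin d → ℤ) → ℂ) : Prop :=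
  ∀ (n : Fin d → ℤ) (j : Fin d), V (n + (q j : ℤ) • Pi.single j 1) = V n

/-- The discrete Fourier transform `V̂_ℓ = Q^{-1/2} Σ_{m∈W} e^{-2πi⟨m,ℓ⟩} V_m`. -/
def Vhat {d : ℕ} (q : Fin d → ℕ) (V : (Fin d → ℤ) → ℂ) (l : Fin d → ℝ) : ℂ :=
  ((1 / Real.sqrt (∏ j, (q j : ℝ)) : ℝ) : ℂ) *
    ∑ m ∈ Wcell q, Complex.exp (-(2 * Real.pi * Complex.I) *
      ((∑ j, (m j : ℝ) * l j : ℝ) : ℂ)) * V m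

/-- The diagonal matrix `D^z` with entries `p(μ_n ⊙ z)`, as Laurent polynomials. -/
def Dmat {d : ℕ} (q : Fin d → ℕ) (p : LMv d) :
    Matrix {n // n ∈ Wcell q} {n // n ∈ Wcell q} (LMvF d) :=
  Matrix.diagonal fun n => embedZ (scaleZ (muV q n.1) p)

/-- The constant matrix `B` with entries `V̂((n-n')/q)`. -/
def Bmat {d : ℕ} (q : Fin d → ℕ) (V : (Fin d → ℤ) → ℂ) :
    Matrix {n // n ∈ Wcell q} {n // n ∈ Wcell q} (LMvF d) :=
  fun n n' => AddMonoidAlgebra.ofCoeff (Finsupp.single ((0 : Fin d →₀ ℤ), (0:ℤ))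
    (Vhat q V fun j => ((n.1 j - n'.1 j : ℤ) : ℝ) / (q j : ℝ)))

/-- `det(D^z + B - λI)`, a Laurent polynomial in `z` and `λ`. -/
def detLaur {d : ℕ} (q : Fin d → ℕ) (p : LMv d) (V : (Fin d → ℤ) → ℂ) : LMvF d :=
  Matrix.det (Dmat q p + Bmat q V - Matrix.diagonal fun _ => lamF d)
/-- Ordinary polynomials in `z₁,…,z_d` and `λ̃` (the extra `Unit` variable is `λ̃`). -/
abbrev MvP (d : ℕ) : Type := MvPolynomial (Fin d ⊕ Unit) ℂ

/-- Conversion of a Laurent polynomial in `(z,λ)` with nonnegative exponents into an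
ordinary polynomial in `ℂ[z₁,…,z_d,λ̃]` (negative exponents are truncated). -/
def toMvP {d : ℕ} (P : LMvF d) : MvP d :=
  Finsupp.sum P.coeff fun β c =>
    MvPolynomial.monomial
      (Finsupp.equivFunOnFinite.symm
        (Sum.elim (fun j => (β.1 j).toNat) (fun _ => β.2.toNat))) c

/-- `γ_j(p)`: minus the lowest exponent of `z_j` in `p` if that exponent is negative,
and `0` otherwise. -/
def gammaV {d : ℕ} (p : LMv d) (j : Fin d) : ℤ :=
  max 0 (-(WithTop.untopD 0 ((Finsupp.support p.coeff).image fun α => α j).min))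

/-- The exponent vector `γ' = (γ₁',…,γ_d')` computed from the lowest degree component of `p`. -/
def gammaE' {d : ℕ} (p : LMv d) : Fin d →₀ ℤ :=
  Finsupp.equivFunOnFinite.symm fun j => gammaV (lowComp p) j

/-- The polynomial `r_n(z,λ̃) = λ̃ z^{γ'} h(μ_n⊙z) − z^{γ'} ∈ ℂ[z,λ̃]`. -/
def rPoly {d : ℕ} (q : Fin d → ℕ) (p : LMv d) (n : Fin d → ℤ) : MvP d :=
  MvPolynomial.X (Sum.inr ()) *
      toMvP ((AddMonoidAlgebra.single (gammaE' p, (0:ℤ)) (1:ℂ) : LMvF d) * embedZ (scaleZ (muV q n) (lowComp p)))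
    - toMvP (AddMonoidAlgebra.ofCoeff (Finsupp.single (gammaE' p, (0:ℤ)) (1:ℂ)))

/-- Substitution `w_j ↦ z_j^{q_j}` (fixing `λ̃`) on ordinary polynomials. -/
def stretchMv {d : ℕ} (q : Fin d → ℕ) : MvP d →ₐ[ℂ] MvP d :=
  MvPolynomial.aeval
    (Sum.elim (fun j => MvPolynomial.X (Sum.inl j) ^ q j)
      (fun _ => MvPolynomial.X (Sum.inr ())))

/-- Substitution `z_j ↦ c_j z_j` (fixing `λ̃`) on ordinary polynomials. -/
def scaleMv {d : ℕ} (c : Fin d → ℂ) : MvP d →ₐ[ℂ] MvP d :=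
  MvPolynomial.aeval
    (Sum.elim (fun j => MvPolynomial.C (c j) * MvPolynomial.X (Sum.inl j))
      (fun _ => MvPolynomial.X (Sum.inr ())))

/-- `ã(z,λ̃) = ∏_{n∈W} r_n(z,λ̃)`. -/
def atilde {d : ℕ} (q : Fin d → ℕ) (p : LMv d) : MvP d := ∏ n ∈ Wcell q, rPoly q p n

/-- Substitution `λ ↦ λ̃⁻¹` on Laurent polynomials in `(z,λ)`. -/
def invLam {d : ℕ} (P : LMvF d) : LMvF d :=
  AddMonoidAlgebra.ofCoeff (Finsupp.mapDomain (fun β : (Fin d →₀ ℤ) × ℤ => (β.1, -β.2)) P.coeff)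

/-- The exponent vector `(γ₁ Q/q₁, …, γ_d Q/q_d)` computed from `p`. -/
def gammaQE {d : ℕ} (q : Fin d → ℕ) (p : LMv d) : Fin d →₀ ℤ :=
  Finsupp.equivFunOnFinite.symm fun j => gammaV p j * (((∏ i, q i) / q j : ℕ) : ℤ)

/-- `ℛ(w,λ̃) = λ̃^Q w₁^{γ₁Q/q₁}⋯w_d^{γ_dQ/q_d} 𝒫(w,λ̃⁻¹)`. -/
def Rcal {d : ℕ} (q : Fin d → ℕ) (p : LMv d) (P : LMvF d) : LMvF d :=
  (AddMonoidAlgebra.single (gammaQE q p, ((∏ j, q j : ℕ) : ℤ)) (1:ℂ) : LMvF d) * invLam P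
/-- Reduction of `v ∈ ℤ^d` modulo the lattice `q₁ℤ ⊕ ⋯ ⊕ q_dℤ` into `W`. -/
def modW {d : ℕ} (q : Fin d → ℕ) (hq : ∀ j, 1 ≤ q j) (v : Fin d → ℤ) :
    {x // x ∈ Wcell q} :=
  ⟨fun j => v j % (q j : ℤ), by
    simp only [Wcell, Fintype.mem_piFinset, Finset.mem_image, Finset.mem_range]
    intro j
    have h1 : (0:ℤ) < (q j : ℤ) := by exact_mod_cast hq j
    have h2 : v j % (q j : ℤ) < (q j : ℤ) := Int.emod_lt_of_pos _ h1
    have h3 : (0:ℤ) ≤ v j % (q j : ℤ) := Int.emod_nonneg _ (by omega)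
    exact ⟨(v j % (q j : ℤ)).toNat, by omega, by omega⟩⟩

/-- The extension `u^x` of `u : ℂ^W` to `ℤ^d` satisfying `u^x_{n+m⊙q} = e^{2πi⟨m⊙q,x⟩}u_n`. -/
def extFn {d : ℕ} (q : Fin d → ℕ) (hq : ∀ j, 1 ≤ q j) (x : Fin d → ℝ)
    (u : {n // n ∈ Wcell q} → ℂ) (v : Fin d → ℤ) : ℂ :=
  Complex.exp (2 * Real.pi * Complex.I *
      ∑ j, ((((v j / (q j : ℤ)) * (q j : ℤ) : ℤ) : ℂ) * ((x j : ℝ) : ℂ))) *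
    u (modW q hq v)

/-- The Floquet restriction `H̃(x)` of `H = A + V` to `ℂ^W`. -/
def HtildeFn {d : ℕ} (q : Fin d → ℕ) (hq : ∀ j, 1 ≤ q j) (x : Fin d → ℝ)
    (a : (Fin d → ℤ) →₀ ℂ) (V : (Fin d → ℤ) → ℂ)
    (u : {n // n ∈ Wcell q} → ℂ) : {n // n ∈ Wcell q} → ℂ :=
  fun m => (Finsupp.sum a fun k c => c * extFn q hq x u (fun j => m.1 j - k j)) + V m.1 * u m

/-- The matrix of `H̃(x)` in the standard basis of `ℂ^W`. -/
def Hmat {d : ℕ} (q : Fin d → ℕ) (hq : ∀ j, 1 ≤ q j) (x : Fin d → ℝ)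
    (a : (Fin d → ℤ) →₀ ℂ) (V : (Fin d → ℤ) → ℂ) :
    Matrix {n // n ∈ Wcell q} {n // n ∈ Wcell q} ℂ :=
  fun m n => HtildeFn q hq x a V (Pi.single n 1) m

/-- The Floquet–Bloch transform matrix `ℱ^x`. -/
def Fmat {d : ℕ} (q : Fin d → ℕ) (x : Fin d → ℝ) :
    Matrix {n // n ∈ Wcell q} {n // n ∈ Wcell q} ℂ :=
  fun l n => ((1 / Real.sqrt (∏ j, (q j : ℝ)) : ℝ) : ℂ) *
    Complex.exp (-(2 * Real.pi * Complex.I) *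
      ∑ j, ((((l.1 j : ℝ) / (q j : ℝ) + x j : ℝ) : ℂ) * ((n.1 j : ℤ) : ℂ)))

/-- Numerical evaluation of the symbol `p(z) = Σ_n a_n z^{-n}`. -/
def pEvalN {d : ℕ} (a : (Fin d → ℤ) →₀ ℂ) (z : Fin d → ℂ) : ℂ :=
  Finsupp.sum a fun n c => c * ∏ j, z j ^ (-(n j))

/-- The numerical diagonal matrix `D^z`, `z = e^{2πix}`, with entries `p(μ_n ⊙ z)`. -/
def DmatN {d : ℕ} (q : Fin d → ℕ) (x : Fin d → ℝ) (a : (Fin d → ℤ) →₀ ℂ) :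
    Matrix {n // n ∈ Wcell q} {n // n ∈ Wcell q} ℂ :=
  Matrix.diagonal fun n => pEvalN a fun j =>
    muC (q j) (n.1 j) * Complex.exp (2 * Real.pi * Complex.I * ((x j : ℝ) : ℂ))

/-- The numerical matrix `B`. -/
def BmatN {d : ℕ} (q : Fin d → ℕ) (V : (Fin d → ℤ) → ℂ) :
    Matrix {n // n ∈ Wcell q} {n // n ∈ Wcell q} ℂ :=
  fun n n' => Vhat q V fun j => ((n.1 j - n'.1 j : ℤ) : ℝ) / (q j : ℝ)

/-- The symbol of the discrete Laplacian: `p(z) = -(Σ_j z_j + z_j⁻¹)`. -/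
def pLap (d : ℕ) : LMv d :=
  - ∑ j : Fin d, ((AddMonoidAlgebra.single (Finsupp.single j (1:ℤ)) (1:ℂ) : LMv d)
      + (AddMonoidAlgebra.single (Finsupp.single j (-1:ℤ)) (1:ℂ) : LMv d))

/-- The exponent vector `(a, b) ∈ ℤ²`. -/
def ee2 (a b : ℤ) : Fin 2 →₀ ℤ := Finsupp.single 0 a + Finsupp.single 1 b

/-- The monomial `z₁^a z₂^b`. -/
def mono2 (a b : ℤ) : LMv 2 := AddMonoidAlgebra.single (ee2 a b) (1:ℂ)

/-- The symbol of the extended Harper lattice Laplacian. -/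
def pEHM : LMv 2 :=
  -(mono2 1 0 + mono2 (-1) 0 + mono2 0 1 + mono2 0 (-1)
    + mono2 1 (-1) + mono2 (-1) 1 + mono2 1 1 + mono2 (-1) (-1))

/-- The symbol of the (sheared) triangular lattice Laplacian. -/
def pTri : LMv 2 :=
  -(mono2 1 0 + mono2 (-1) 0 + mono2 0 1 + mono2 0 (-1) + mono2 1 (-1) + mono2 (-1) 1)


/-! ### Auxiliary lemmas for stmt10 -/

section Stmt10Aux

variable {d : ℕ}

lemma scaleZ_apply (c : Fin d → ℂ) (p : LMv d) (α : Fin d →₀ ℤ) :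
    (scaleZ c p).coeff α = (∏ j, c j ^ (α j)) * p.coeff α := by
  classical
  rw [scaleZ, AddMonoidAlgebra.coeff_ofCoeff, Finsupp.sum_apply, Finsupp.sum]
  rw [Finset.sum_eq_single α]
  · rw [Finsupp.single_apply]; simp
  · intro β hβ hne
    rw [Finsupp.single_apply, if_neg hne]
  · intro hα
    rw [Finsupp.notMem_support_iff.mp hα]
    simp

lemma scaleZ_support {c : Fin d → ℂ} (hc : ∀ j, c j ≠ 0) (p : LMv d) :
    (scaleZ c p).coeff.support = p.coeff.support := by
  ext α
  have hprod : (∏ j, c j ^ (α j)) ≠ 0 :=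
    Finset.prod_ne_zero_iff.mpr fun j _ => zpow_ne_zero _ (hc j)
  simp [Finsupp.mem_support_iff, scaleZ_apply, hprod]

lemma muV_ne_zero (q : Fin d → ℕ) (n : Fin d → ℤ) (j : Fin d) : muV q n j ≠ 0 :=
  Complex.exp_ne_zero _

lemma embZ_inj : Function.Injective (fun α : Fin d →₀ ℤ => (α, (0:ℤ))) := by
  intro a b h; exact congrArg Prod.fst h

lemma embedZ_apply (h : LMv d) (α : Fin d →₀ ℤ) : (embedZ h).coeff (α, (0:ℤ)) = h.coeff α :=
  Finsupp.mapDomain_apply embZ_inj h.coeff α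

lemma embedZ_apply_ne (h : LMv d) (α : Fin d →₀ ℤ) {k : ℤ} (hk : k ≠ 0) :
    (embedZ h).coeff (α, k) = 0 := by
  show Finsupp.mapDomain (fun α => (α, (0:ℤ))) h.coeff (α, k) = 0
  apply Finsupp.mapDomain_notin_range
  rintro ⟨β, hβ⟩
  exact hk (congrArg Prod.snd hβ).symm

/-- The factor `p(μ_n ⊙ z) - λ`. -/
def fN (q : Fin d → ℕ) (p : LMv d) (n : Fin d → ℤ) : LMvF d :=
  embedZ (scaleZ (muV q n) p) - lamF d

lemma Ptilde_eq (q : Fin d → ℕ) (p : LMv d) (S : Finset (Finset (Fin d → ℤ)))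
    (C : Finset (Fin d → ℤ) → ℂ) :
    Ptilde q p S C = (∏ n ∈ Wcell q, fN q p n) + ∑ X ∈ S, C X • ∏ n ∈ X, fN q p n := rfl

lemma fN_apply_z (q : Fin d → ℕ) (p : LMv d) (n : Fin d → ℤ) (α : Fin d →₀ ℤ)
    (hα : (α, (0:ℤ)) ≠ ((0 : Fin d →₀ ℤ), (1:ℤ))) :
    (fN q p n).coeff (α, (0:ℤ)) = (scaleZ (muV q n) p).coeff α := by
  have h1 : (fN q p n).coeff (α, (0:ℤ))
      = (embedZ (scaleZ (muV q n) p)).coeff (α, (0:ℤ)) - (lamF d).coeff (α, (0:ℤ)) := rfl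
  rw [h1, embedZ_apply, lamF, AddMonoidAlgebra.coeff_ofCoeff, Finsupp.single_apply, if_neg (fun h => hα h.symm), sub_zero]

lemma fN_apply_lam (q : Fin d → ℕ) (p : LMv d) (n : Fin d → ℤ) :
    (fN q p n).coeff ((0 : Fin d →₀ ℤ), (1:ℤ)) = -1 := by
  have h1 : (fN q p n).coeff ((0 : Fin d →₀ ℤ), (1:ℤ))
      = (embedZ (scaleZ (muV q n) p)).coeff ((0 : Fin d →₀ ℤ), (1:ℤ))
        - (lamF d).coeff ((0 : Fin d →₀ ℤ), (1:ℤ)) := rfl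
  rw [h1, embedZ_apply_ne _ _ one_ne_zero, lamF, AddMonoidAlgebra.coeff_ofCoeff, Finsupp.single_apply, if_pos rfl]
  ring

lemma fN_support (q : Fin d → ℕ) (p : LMv d) (n : Fin d → ℤ) :
    ∀ β ∈ (fN q p n).coeff.support,
      (β.2 = 0 ∧ β.1 ∈ p.coeff.support) ∨ β = ((0 : Fin d →₀ ℤ), (1:ℤ)) := by
  classical
  intro β hβ
  have h1 := Finsupp.support_sub (f := (embedZ (scaleZ (muV q n) p)).coeff) (g := (lamF d).coeff) hβ
  rw [Finset.mem_union] at h1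
  rcases h1 with h | h
  · left
    have h2 := Finsupp.mapDomain_support (f := fun α : Fin d →₀ ℤ => (α, (0:ℤ))) h
    rw [Finset.mem_image] at h2
    obtain ⟨α, hα, rfl⟩ := h2
    rw [scaleZ_support (muV_ne_zero q n) p] at hα
    exact ⟨rfl, hα⟩
  · right
    have := Finsupp.support_single_subset h
    simpa using this

lemma gammaV_nonneg (p : LMv d) (j : Fin d) : 0 ≤ gammaV p j := le_max_left _ _

lemma gammaV_le (p : LMv d) (j : Fin d) {α : Fin d →₀ ℤ} (hα : α ∈ p.coeff.support) :
    -(gammaV p j) ≤ α j := by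
  classical
  set s := (Finsupp.support p.coeff).image fun β : Fin d →₀ ℤ => β j with hs
  have hmem : α j ∈ s := Finset.mem_image_of_mem _ hα
  obtain ⟨b, hb⟩ := Finset.min_of_nonempty ⟨α j, hmem⟩
  have hble : b ≤ α j := by
    have := Finset.min_le hmem
    rw [hb] at this
    exact_mod_cast this
  have huntop : WithTop.untopD 0 s.min = b := by rw [hb]; rfl
  have : gammaV p j = max 0 (-b) := by rw [gammaV, ← hs, huntop]
  rw [this]
  have : -max 0 (-b) ≤ b := by
    rcases le_total 0 (-b) with h | h
    · rw [max_eq_right h]; omega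
    · rw [max_eq_left h]; omega
  omega

lemma gammaV_attain (p : LMv d) (j : Fin d) (h : 0 < gammaV p j) :
    ∃ α ∈ p.coeff.support, α j = -(gammaV p j) := by
  classical
  set s := (Finsupp.support p.coeff).image fun β : Fin d →₀ ℤ => β j with hs
  by_cases hse : s = ∅
  · exfalso
    have : s.min = ⊤ := Finset.min_eq_top.mpr hse
    rw [gammaV, ← hs, this] at h
    simp at h
  · obtain ⟨b, hb⟩ := Finset.min_of_nonempty (Finset.nonempty_of_ne_empty hse)
    have huntop : WithTop.untopD 0 s.min = b := by rw [hb]; rfl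
    have hγ : gammaV p j = max 0 (-b) := by rw [gammaV, ← hs, huntop]
    have hbneg : b < 0 := by
      by_contra hc
      push_neg at hc
      rw [hγ, max_eq_left (by omega)] at h
      omega
    have hγb : gammaV p j = -b := by rw [hγ, max_eq_right (by omega)]
    have hbmem : b ∈ s := Finset.mem_of_min hb
    rw [hs, Finset.mem_image] at hbmem
    obtain ⟨α, hα, hαj⟩ := hbmem
    exact ⟨α, hα, by omega⟩

end Stmt10Aux


section Stmt10Aux2

variable {d : ℕ}

/-- Evaluation of the `z_j`-exponent, as an additive hom. -/
def Ej (d : ℕ) (j : Fin d) : ((Fin d →₀ ℤ) × ℤ) →+ ℤ :=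
  (Finsupp.applyAddHom j).comp (AddMonoidHom.fst _ _)

/-- Evaluation of the `λ`-exponent, as an additive hom. -/
def El (d : ℕ) : ((Fin d →₀ ℤ) × ℤ) →+ ℤ := AddMonoidHom.snd _ _

@[simp] lemma Ej_apply (j : Fin d) (β : (Fin d →₀ ℤ) × ℤ) : Ej d j β = β.1 j := rfl
@[simp] lemma El_apply (β : (Fin d →₀ ℤ) × ℤ) : El d β = β.2 := rfl

lemma fN_bound_lam (q : Fin d → ℕ) (p : LMv d) (n : Fin d → ℤ) :
    ∀ β ∈ (fN q p n).coeff.support, (0:ℤ) ≤ El d β ∧ El d β ≤ 1 := by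
  intro β hβ
  rcases fN_support q p n β hβ with ⟨h2, _⟩ | h2 <;> simp [h2]

lemma fN_bound_z (q : Fin d → ℕ) (p : LMv d) (n : Fin d → ℤ) (j : Fin d) :
    ∀ β ∈ (fN q p n).coeff.support, -(gammaV p j) ≤ Ej d j β := by
  intro β hβ
  rcases fN_support q p n β hβ with ⟨_, h2⟩ | h2
  · simpa using gammaV_le p j h2
  · have := gammaV_nonneg p j
    simp [h2]; omega

lemma fN_exists_min (q : Fin d → ℕ) (p : LMv d) (n : Fin d → ℤ) (j : Fin d) :
    ∃ β ∈ (fN q p n).coeff.support, Ej d j β = -(gammaV p j) := by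
  rcases eq_or_lt_of_le (gammaV_nonneg p j) with h | h
  · refine ⟨((0 : Fin d →₀ ℤ), (1:ℤ)), ?_, by simp [← h]⟩
    rw [Finsupp.mem_support_iff, fN_apply_lam]
    exact neg_ne_zero.mpr one_ne_zero
  · obtain ⟨α, hα, hαj⟩ := gammaV_attain p j h
    have hαne : (α, (0:ℤ)) ≠ ((0 : Fin d →₀ ℤ), (1:ℤ)) := by
      intro hc
      exact one_ne_zero (congrArg Prod.snd hc).symm
    refine ⟨(α, (0:ℤ)), ?_, by simpa using hαj⟩
    rw [Finsupp.mem_support_iff, fN_apply_z q p n α hαne, scaleZ_apply]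
    have hprod : (∏ i, muV q n i ^ (α i)) ≠ 0 :=
      Finset.prod_ne_zero_iff.mpr fun i _ => zpow_ne_zero _ (muV_ne_zero q n i)
    exact mul_ne_zero hprod (Finsupp.mem_support_iff.mp hα)

lemma stretchE_apply (q : Fin d → ℕ) (α : Fin d →₀ ℤ) (i : Fin d) :
    stretchE q α i = (q i : ℤ) * α i := by
  classical
  rw [stretchE, Finsupp.sum_apply, Finsupp.sum]
  rw [Finset.sum_eq_single i]
  · rw [Finsupp.single_apply]; simp
  · intro b hb hne
    rw [Finsupp.single_apply, if_neg hne]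
  · intro hi
    rw [Finsupp.notMem_support_iff.mp hi]
    simp

lemma stretchE_injective (q : Fin d → ℕ) (hq : ∀ j, 1 ≤ q j) :
    Function.Injective (stretchE q) := by
  intro a b h
  ext i
  have := congrArg (fun f : Fin d →₀ ℤ => f i) h
  simp only [stretchE_apply] at this
  have hqi : (0:ℤ) < (q i : ℤ) := by exact_mod_cast hq i
  exact mul_left_cancel₀ (ne_of_gt hqi) this

lemma stretchE_zero (q : Fin d → ℕ) : stretchE q 0 = 0 := by
  rw [stretchE]; simp

lemma stretchF_pair_inj (q : Fin d → ℕ) (hq : ∀ j, 1 ≤ q j) :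
    Function.Injective (fun β : (Fin d →₀ ℤ) × ℤ => (stretchE q β.1, β.2)) := by
  intro a b h
  have h1 := congrArg Prod.fst h
  have h2 := congrArg Prod.snd h
  exact Prod.ext (stretchE_injective q hq h1) h2

lemma stretchF_apply (q : Fin d → ℕ) (hq : ∀ j, 1 ≤ q j) (P : LMvF d)
    (α : Fin d →₀ ℤ) (k : ℤ) :
    (stretchF q P).coeff (stretchE q α, k) = P.coeff (α, k) :=
  Finsupp.mapDomain_apply (stretchF_pair_inj q hq) P.coeff (α, k)

lemma invLam_apply (P : LMvF d) (α : Fin d →₀ ℤ) (k : ℤ) :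
    (invLam P).coeff (α, k) = P.coeff (α, -k) := by
  have hinj : Function.Injective (fun β : (Fin d →₀ ℤ) × ℤ => (β.1, -β.2)) := by
    intro a b h
    have h1 := congrArg Prod.fst h
    have h2 := congrArg Prod.snd h
    exact Prod.ext h1 (neg_injective h2)
  have := Finsupp.mapDomain_apply hinj P.coeff (α, -k)
  simpa [invLam, AddMonoidAlgebra.coeff_ofCoeff] using this

lemma gammaQE_apply (q : Fin d → ℕ) (p : LMv d) (j : Fin d) :
    gammaQE q p j = gammaV p j * (((∏ i, q i) / q j : ℕ) : ℤ) := by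
  rw [gammaQE]
  exact congrFun (Finsupp.coe_equivFunOnFinite_symm _) j

lemma Rcal_apply (q : Fin d → ℕ) (p : LMv d) (P : LMvF d) (β : (Fin d →₀ ℤ) × ℤ) :
    (Rcal q p P).coeff β = P.coeff (β.1 - gammaQE q p, ((∏ j, q j : ℕ) : ℤ) - β.2) := by
  rw [Rcal, AddMonoidAlgebra.coeff_single_mul_apply]
  have h1 : -(gammaQE q p, ((∏ j, q j : ℕ) : ℤ)) + β
      = (β.1 - gammaQE q p, β.2 - ((∏ j, q j : ℕ) : ℤ)) := by
    rw [Prod.ext_iff]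
    constructor
    · simp [sub_eq_neg_add]
    · simp; ring
  rw [h1, invLam_apply, one_mul, neg_sub]

lemma Wcell_card (q : Fin d → ℕ) : (Wcell q).card = ∏ j, q j := by
  classical
  rw [Wcell, Fintype.card_piFinset]
  congr 1
  ext j
  rw [Finset.card_image_of_injective _ (fun a b h => by exact_mod_cast h)]
  exact Finset.card_range (q j)

end Stmt10Aux2

section Stmt10Gen
variable {M : Type*} [AddCommMonoid M]

lemma supp_prod_bound {ι : Type*} (E : M →+ ℤ) (s : Finset ι)
    (f : ι → AddMonoidAlgebra ℂ M) (m N : ι → ℤ)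
    (h : ∀ n ∈ s, ∀ β ∈ (f n).coeff.support, m n ≤ E β ∧ E β ≤ N n) :
    ∀ β ∈ (∏ n ∈ s, f n).coeff.support, (∑ n ∈ s, m n) ≤ E β ∧ E β ≤ ∑ n ∈ s, N n := by
  classical
  induction s using Finset.induction_on with
  | empty =>
    intro β hβ
    have : β = 0 := by
      have hs := Finsupp.support_single_subset (α := M) (b := (1:ℂ)) (a := 0)
      rw [Finset.prod_empty] at hβ
      have hβ' : β ∈ ({0} : Finset M) := hs hβ
      simpa using hβ'
    simp [this]
  | @insert a s' ha ih =>
    intro β hβ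
    rw [Finset.prod_insert ha] at hβ
    have hβ' := AddMonoidAlgebra.support_coeff_mul_subset _ _ hβ
    rw [Finset.mem_add] at hβ'
    obtain ⟨β₁, hβ₁, β₂, hβ₂, rfl⟩ := hβ'
    have h1 := h a (Finset.mem_insert_self a s') β₁ hβ₁
    have h2 := ih (fun n hn => h n (Finset.mem_insert_of_mem hn)) β₂ hβ₂
    rw [Finset.sum_insert ha, Finset.sum_insert ha]
    simp only [map_add]
    constructor <;> linarith [h1.1, h1.2, h2.1, h2.2]

lemma supp_prod_lb {ι : Type*} (E : M →+ ℤ) (s : Finset ι)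
    (f : ι → AddMonoidAlgebra ℂ M) (m : ι → ℤ)
    (h : ∀ n ∈ s, ∀ β ∈ (f n).coeff.support, m n ≤ E β) :
    ∀ β ∈ (∏ n ∈ s, f n).coeff.support, (∑ n ∈ s, m n) ≤ E β := by
  classical
  induction s using Finset.induction_on with
  | empty =>
    intro β hβ
    have : β = 0 := by
      have hs := Finsupp.support_single_subset (α := M) (b := (1:ℂ)) (a := 0)
      rw [Finset.prod_empty] at hβ
      have hβ' : β ∈ ({0} : Finset M) := hs hβ
      simpa using hβ'
    simp [this]
  | @insert a s' ha ih =>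
    intro β hβ
    rw [Finset.prod_insert ha] at hβ
    have hβ' := AddMonoidAlgebra.support_coeff_mul_subset _ _ hβ
    rw [Finset.mem_add] at hβ'
    obtain ⟨β₁, hβ₁, β₂, hβ₂, rfl⟩ := hβ'
    have h1 := h a (Finset.mem_insert_self a s') β₁ hβ₁
    have h2 := ih (fun n hn => h n (Finset.mem_insert_of_mem hn)) β₂ hβ₂
    rw [Finset.sum_insert ha]
    simp only [map_add]
    linarith

lemma exists_supp_mul_min [NoZeroDivisors (AddMonoidAlgebra ℂ M)]
    (E : M →+ ℤ) {f g : AddMonoidAlgebra ℂ M} (a b : ℤ)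
    (hf : ∀ β ∈ f.coeff.support, a ≤ E β) (hg : ∀ β ∈ g.coeff.support, b ≤ E β)
    (hfa : ∃ β ∈ f.coeff.support, E β = a) (hga : ∃ β ∈ g.coeff.support, E β = b) :
    ∃ β ∈ (f * g).coeff.support, E β = a + b := by
  classical
  set f₀ : AddMonoidAlgebra ℂ M := AddMonoidAlgebra.ofCoeff (f.coeff.filter (fun β => E β = a)) with hf₀
  set f₁ : AddMonoidAlgebra ℂ M := AddMonoidAlgebra.ofCoeff (f.coeff.filter (fun β => ¬ (E β = a))) with hf₁
  set g₀ : AddMonoidAlgebra ℂ M := AddMonoidAlgebra.ofCoeff (g.coeff.filter (fun β => E β = b)) with hg₀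
  set g₁ : AddMonoidAlgebra ℂ M := AddMonoidAlgebra.ofCoeff (g.coeff.filter (fun β => ¬ (E β = b))) with hg₁
  have hfsplit : f = f₀ + f₁ := by
    rw [← AddMonoidAlgebra.coeff_inj]
    exact (Finsupp.filter_pos_add_filter_neg f.coeff (fun β => E β = a)).symm
  have hgsplit : g = g₀ + g₁ := by
    rw [← AddMonoidAlgebra.coeff_inj]
    exact (Finsupp.filter_pos_add_filter_neg g.coeff (fun β => E β = b)).symm
  have hf₀ne : f₀ ≠ 0 := by
    obtain ⟨β, hβ, hEβ⟩ := hfa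
    intro h0
    have : f₀.coeff β = f.coeff β := Finsupp.filter_apply_pos _ _ hEβ
    rw [h0] at this
    exact Finsupp.mem_support_iff.mp hβ this.symm
  have hg₀ne : g₀ ≠ 0 := by
    obtain ⟨β, hβ, hEβ⟩ := hga
    intro h0
    have : g₀.coeff β = g.coeff β := Finsupp.filter_apply_pos _ _ hEβ
    rw [h0] at this
    exact Finsupp.mem_support_iff.mp hβ this.symm
  have hmul : f₀ * g₀ ≠ 0 := mul_ne_zero hf₀ne hg₀ne
  obtain ⟨γ, hγ⟩ := Finsupp.support_nonempty_iff.mpr (mt AddMonoidAlgebra.coeff_eq_zero.mp hmul)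
  have hγE : E γ = a + b := by
    have hm := AddMonoidAlgebra.support_coeff_mul_subset f₀ g₀ hγ
    rw [Finset.mem_add] at hm
    obtain ⟨β₁, hβ₁, β₂, hβ₂, rfl⟩ := hm
    rw [Finsupp.support_filter, Finset.mem_filter] at hβ₁ hβ₂
    rw [map_add, hβ₁.2, hβ₂.2]
  refine ⟨γ, ?_, hγE⟩
  rw [Finsupp.mem_support_iff]
  have key : ∀ (u v : AddMonoidAlgebra ℂ M),
      (∀ β ∈ u.coeff.support, a ≤ E β) → (∀ β ∈ v.coeff.support, b ≤ E β) →
      ((∀ β ∈ u.coeff.support, a < E β) ∨ (∀ β ∈ v.coeff.support, b < E β)) →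
      (u * v).coeff γ = 0 := by
    intro u v hu hv hcase
    by_contra hne
    have hmem : γ ∈ (u * v).coeff.support := Finsupp.mem_support_iff.mpr hne
    have hm := AddMonoidAlgebra.support_coeff_mul_subset u v hmem
    rw [Finset.mem_add] at hm
    obtain ⟨β₁, hβ₁, β₂, hβ₂, heq⟩ := hm
    have h1 := hu β₁ hβ₁
    have h2 := hv β₂ hβ₂
    have hEsum : E β₁ + E β₂ = a + b := by rw [← map_add, heq, hγE]
    rcases hcase with hc | hc
    · have := hc β₁ hβ₁; linarith
    · have := hc β₂ hβ₂; linarith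
  have hf₁sup : ∀ β ∈ f₁.coeff.support, a < E β := by
    intro β hβ
    rw [Finsupp.support_filter, Finset.mem_filter] at hβ
    exact lt_of_le_of_ne (hf β hβ.1) (Ne.symm hβ.2)
  have hg₁sup : ∀ β ∈ g₁.coeff.support, b < E β := by
    intro β hβ
    rw [Finsupp.support_filter, Finset.mem_filter] at hβ
    exact lt_of_le_of_ne (hg β hβ.1) (Ne.symm hβ.2)
  have hf₀sup : ∀ β ∈ f₀.coeff.support, a ≤ E β := by
    intro β hβ
    rw [Finsupp.support_filter, Finset.mem_filter] at hβ
    exact le_of_eq hβ.2.symm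
  have hg₀sup : ∀ β ∈ g₀.coeff.support, b ≤ E β := by
    intro β hβ
    rw [Finsupp.support_filter, Finset.mem_filter] at hβ
    exact le_of_eq hβ.2.symm
  have expand : f * g = f₀ * g₀ + (f₀ * g₁ + f₁ * g₀ + f₁ * g₁) := by
    rw [hfsplit, hgsplit]; ring
  rw [expand]
  have z1 : (f₀ * g₁).coeff γ = 0 := key _ _ hf₀sup (fun β hβ => le_of_lt (hg₁sup β hβ)) (Or.inr hg₁sup)
  have z2 : (f₁ * g₀).coeff γ = 0 := key _ _ (fun β hβ => le_of_lt (hf₁sup β hβ)) hg₀sup (Or.inl hf₁sup)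
  have z3 : (f₁ * g₁).coeff γ = 0 := key _ _ (fun β hβ => le_of_lt (hf₁sup β hβ))
    (fun β hβ => le_of_lt (hg₁sup β hβ)) (Or.inl hf₁sup)
  have hne : (f₀ * g₀).coeff γ ≠ 0 := Finsupp.mem_support_iff.mp hγ
  have hre : (f₀ * g₀ + (f₀ * g₁ + f₁ * g₀ + f₁ * g₁)).coeff γ
      = (f₀ * g₀).coeff γ + ((f₀ * g₁).coeff γ + (f₁ * g₀).coeff γ + (f₁ * g₁).coeff γ) := rfl
  rw [hre, z1, z2, z3]
  simpa using hne

lemma exists_supp_prod_min [NoZeroDivisors (AddMonoidAlgebra ℂ M)]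
    {ι : Type*} (E : M →+ ℤ) (s : Finset ι)
    (f : ι → AddMonoidAlgebra ℂ M) (m : ι → ℤ)
    (hlb : ∀ n ∈ s, ∀ β ∈ (f n).coeff.support, m n ≤ E β)
    (hw : ∀ n ∈ s, ∃ β ∈ (f n).coeff.support, E β = m n) :
    ∃ β ∈ (∏ n ∈ s, f n).coeff.support, E β = ∑ n ∈ s, m n := by
  classical
  induction s using Finset.induction_on with
  | empty =>
    refine ⟨0, ?_, by simp⟩
    rw [Finset.prod_empty, Finsupp.mem_support_iff]
    have h1 : (1 : AddMonoidAlgebra ℂ M).coeff 0 = 1 := by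
      rw [AddMonoidAlgebra.one_def]; simp
    rw [h1]; exact one_ne_zero
  | @insert a s' ha ih =>
    rw [Finset.prod_insert ha, Finset.sum_insert ha]
    exact exists_supp_mul_min E (m a) (∑ n ∈ s', m n)
      (hlb a (Finset.mem_insert_self a s'))
      (supp_prod_lb E s' f m (fun n hn => hlb n (Finset.mem_insert_of_mem hn)))
      (hw a (Finset.mem_insert_self a s'))
      (ih (fun n hn => hlb n (Finset.mem_insert_of_mem hn))
          (fun n hn => hw n (Finset.mem_insert_of_mem hn)))

end Stmt10Gen


section Stmt10Aux3

variable {d : ℕ}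

lemma prod_fN_lam_coeff (q : Fin d → ℕ) (p : LMv d) (s : Finset (Fin d → ℤ)) :
    (∏ n ∈ s, fN q p n).coeff ((0 : Fin d →₀ ℤ), (s.card : ℤ)) = (-1)^s.card := by
  classical
  induction s using Finset.induction_on with
  | empty =>
    rw [Finset.prod_empty, AddMonoidAlgebra.one_def]
    simp
    exact Finsupp.single_eq_same
  | @insert a s' ha ih =>
    rw [Finset.prod_insert ha, Finset.card_insert_of_notMem ha]
    set c : ℕ := s'.card with hc
    set F : LMvF d := ∏ n ∈ s', fN q p n with hF
    have hFbound : ∀ β ∈ F.coeff.support, (0:ℤ) ≤ El d β ∧ El d β ≤ (c:ℤ) := by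
      intro β hβ
      have := supp_prod_bound (El d) s' (fN q p) (fun _ => 0) (fun _ => 1)
        (fun n _ => fN_bound_lam q p n) β hβ
      simpa using this
    have hsplit : fN q p a * F = embedZ (scaleZ (muV q a) p) * F - lamF d * F := by
      rw [fN, sub_mul]
    have h1 : (embedZ (scaleZ (muV q a) p) * F).coeff ((0 : Fin d →₀ ℤ), ((c:ℤ) + 1)) = 0 := by
      by_contra hne
      have hmem := Finsupp.mem_support_iff.mpr hne
      have hm := AddMonoidAlgebra.support_coeff_mul_subset _ _ hmem
      rw [Finset.mem_add] at hm
      obtain ⟨β₁, hβ₁, β₂, hβ₂, heq⟩ := hm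
      have hβ₁2 : β₁.2 = 0 := by
        have := Finsupp.mapDomain_support (f := fun α : Fin d →₀ ℤ => (α, (0:ℤ))) hβ₁
        rw [Finset.mem_image] at this
        obtain ⟨α, _, hα⟩ := this
        exact (congrArg Prod.snd hα).symm
      have hβ₂2 := (hFbound β₂ hβ₂).2
      have hsum : β₁.2 + β₂.2 = (c:ℤ) + 1 := congrArg Prod.snd heq
      simp only [El_apply] at hβ₂2
      omega
    have h2 : (lamF d * F).coeff ((0 : Fin d →₀ ℤ), ((c:ℤ) + 1)) = (-1)^c := by
      rw [lamF, AddMonoidAlgebra.ofCoeff_single, AddMonoidAlgebra.coeff_single_mul_apply, one_mul]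
      have harg : -(((0 : Fin d →₀ ℤ), (1:ℤ))) + ((0 : Fin d →₀ ℤ), ((c:ℤ) + 1))
          = ((0 : Fin d →₀ ℤ), (c:ℤ)) := by
        rw [Prod.ext_iff]; constructor
        · simp
        · simp
      rw [harg]; exact ih
    have hre : (fN q p a * F).coeff ((0 : Fin d →₀ ℤ), ((c:ℤ) + 1))
        = (embedZ (scaleZ (muV q a) p) * F).coeff ((0 : Fin d →₀ ℤ), ((c:ℤ) + 1))
          - (lamF d * F).coeff ((0 : Fin d →₀ ℤ), ((c:ℤ) + 1)) := by
      rw [hsplit]; rfl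
    have hcast : ((c + 1 : ℕ) : ℤ) = (c:ℤ) + 1 := by push_cast; ring
    rw [hcast, hre, h1, h2, pow_succ]
    ring

lemma toMvP_coeff {P : LMvF d}
    (hnn : ∀ β ∈ P.coeff.support, (∀ j, 0 ≤ β.1 j) ∧ 0 ≤ β.2)
    (β₀ : (Fin d →₀ ℤ) × ℤ) (hβ₀ : β₀ ∈ P.coeff.support) :
    MvPolynomial.coeff
      (Finsupp.equivFunOnFinite.symm
        (Sum.elim (fun j => (β₀.1 j).toNat) (fun _ => β₀.2.toNat))) (toMvP P) = P.coeff β₀ := by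
  classical
  rw [toMvP, Finsupp.sum]
  rw [MvPolynomial.coeff_sum]
  rw [Finset.sum_eq_single β₀]
  · rw [MvPolynomial.coeff_monomial, if_pos rfl]
  · intro β hβ hne
    rw [MvPolynomial.coeff_monomial, if_neg]
    intro hcon
    apply hne
    have hfun := Finsupp.equivFunOnFinite.symm.injective hcon
    have h1 : ∀ j, (β.1 j).toNat = (β₀.1 j).toNat := fun j => congrFun hfun (Sum.inl j)
    have h2 : β.2.toNat = β₀.2.toNat := congrFun hfun (Sum.inr ())
    have hβnn := hnn β hβ
    have hβ₀nn := hnn β₀ hβ₀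
    refine Prod.ext ?_ ?_
    · ext j
      have := h1 j
      have ha := hβnn.1 j
      have hb := hβ₀nn.1 j
      omega
    · have := hβnn.2
      have := hβ₀nn.2
      omega
  · intro hcon
    exact absurd hβ₀ hcon

lemma X_not_dvd_of_coeff {σ : Type*} [DecidableEq σ] (P : MvPolynomial σ ℂ) (i : σ)
    (m : σ →₀ ℕ) (hm : m i = 0) (h : MvPolynomial.coeff m P ≠ 0) :
    ¬ (MvPolynomial.X i ∣ P) := by
  rintro ⟨c, hc⟩
  apply h
  rw [hc, mul_comm, MvPolynomial.coeff_mul_X', if_neg]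
  rw [Finsupp.mem_support_iff]
  simp [hm]

end Stmt10Aux3


section Stmt10Aux4

variable {d : ℕ}

lemma prod_fN_supp_bound (q : Fin d → ℕ) (p : LMv d) (s : Finset (Fin d → ℤ)) :
    ∀ β ∈ (∏ n ∈ s, fN q p n).coeff.support,
      ((0:ℤ) ≤ β.2 ∧ β.2 ≤ (s.card : ℤ)) ∧
      ∀ j, -(gammaV p j) * (s.card : ℤ) ≤ β.1 j := by
  intro β hβ
  constructor
  · have := supp_prod_bound (El d) s (fN q p) (fun _ => 0) (fun _ => 1)
      (fun n _ => fN_bound_lam q p n) β hβ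
    simpa [Finset.sum_const, nsmul_eq_mul] using this
  · intro j
    have := supp_prod_lb (Ej d j) s (fN q p) (fun _ => -(gammaV p j))
      (fun n _ => fN_bound_z q p n j) β hβ
    simp only [Finset.sum_const, nsmul_eq_mul, Ej_apply] at this
    calc -(gammaV p j) * (s.card : ℤ) = (s.card : ℤ) * (-(gammaV p j)) := by ring
    _ ≤ β.1 j := this

lemma Ptilde_supp_bound (q : Fin d → ℕ) (p : LMv d)
    (S : Finset (Finset (Fin d → ℤ))) (hS : ∀ X ∈ S, X ⊂ Wcell q)
    (C : Finset (Fin d → ℤ) → ℂ) :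
    ∀ β ∈ (Ptilde q p S C).coeff.support,
      ((0:ℤ) ≤ β.2 ∧ β.2 ≤ ((Wcell q).card : ℤ)) ∧
      ∀ j, -(gammaV p j) * ((Wcell q).card : ℤ) ≤ β.1 j := by
  classical
  intro β hβ
  rw [Ptilde_eq, AddMonoidAlgebra.coeff_add] at hβ
  have hβ' := Finsupp.support_add hβ
  rw [Finset.mem_union] at hβ'
  rcases hβ' with h | h
  · exact prod_fN_supp_bound q p (Wcell q) β h
  · rw [AddMonoidAlgebra.coeff_sum] at h
    have h2 := Finsupp.support_finset_sum h
    rw [Finset.mem_biUnion] at h2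
    obtain ⟨X, hX, hβX⟩ := h2
    rw [AddMonoidAlgebra.coeff_smul] at hβX
    have hβX' := Finsupp.support_smul hβX
    have hb := prod_fN_supp_bound q p X β hβX'
    have hcard : (X.card : ℤ) ≤ ((Wcell q).card : ℤ) := by
      exact_mod_cast Finset.card_le_card (le_of_lt (hS X hX))
    refine ⟨⟨hb.1.1, le_trans hb.1.2 hcard⟩, fun j => ?_⟩
    have hγ := gammaV_nonneg p j
    have := hb.2 j
    nlinarith

lemma Ptilde_coeff_top (q : Fin d → ℕ) (p : LMv d)
    (S : Finset (Finset (Fin d → ℤ))) (hS : ∀ X ∈ S, X ⊂ Wcell q)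
    (C : Finset (Fin d → ℤ) → ℂ) :
    (Ptilde q p S C).coeff ((0 : Fin d →₀ ℤ), ((Wcell q).card : ℤ))
      = (-1)^((Wcell q).card) := by
  classical
  set pt : (Fin d →₀ ℤ) × ℤ := ((0 : Fin d →₀ ℤ), ((Wcell q).card : ℤ)) with hpt
  have hre : (Ptilde q p S C).coeff pt
      = (∏ n ∈ Wcell q, fN q p n).coeff pt + (∑ X ∈ S, C X • ∏ n ∈ X, fN q p n).coeff pt := rfl
  have hG : (∑ X ∈ S, C X • ∏ n ∈ X, fN q p n).coeff pt = 0 := by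
    rw [AddMonoidAlgebra.coeff_sum, Finsupp.finset_sum_apply]
    apply Finset.sum_eq_zero
    intro X hX
    have hv : (∏ n ∈ X, fN q p n).coeff pt = 0 := by
      by_contra hne
      have hmem := Finsupp.mem_support_iff.mpr hne
      have := (prod_fN_supp_bound q p X pt hmem).1.2
      have hcard : X.card < (Wcell q).card := Finset.card_lt_card (hS X hX)
      rw [hpt] at this
      simp only at this
      omega
    have : (C X • ∏ n ∈ X, fN q p n).coeff pt = C X • ((∏ n ∈ X, fN q p n).coeff pt) :=
      AddMonoidAlgebra.coeff_smul_apply _ _ _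
    rw [this, hv]
    simp
  rw [hre, hG, add_zero, hpt, prod_fN_lam_coeff]

lemma Ptilde_exists_min (q : Fin d → ℕ) (p : LMv d)
    (S : Finset (Finset (Fin d → ℤ))) (hS : ∀ X ∈ S, X ⊂ Wcell q)
    (C : Finset (Fin d → ℤ) → ℂ) (j : Fin d) (hγ : 0 < gammaV p j) :
    ∃ β ∈ (Ptilde q p S C).coeff.support,
      β.1 j = -(gammaV p j) * ((Wcell q).card : ℤ) := by
  classical
  obtain ⟨β, hβ, hβE⟩ := exists_supp_prod_min (Ej d j) (Wcell q) (fN q p)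
    (fun _ => -(gammaV p j)) (fun n _ => fN_bound_z q p n j)
    (fun n _ => fN_exists_min q p n j)
  have hβj : β.1 j = -(gammaV p j) * ((Wcell q).card : ℤ) := by
    have hsum : (∑ _n ∈ Wcell q, -(gammaV p j)) = ((Wcell q).card : ℤ) * (-(gammaV p j)) := by
      simp [Finset.sum_const, nsmul_eq_mul]
    simp only [Ej_apply] at hβE
    rw [hβE, hsum]; ring
  refine ⟨β, ?_, hβj⟩
  rw [Finsupp.mem_support_iff]
  have hre : (Ptilde q p S C).coeff β
      = (∏ n ∈ Wcell q, fN q p n).coeff β + (∑ X ∈ S, C X • ∏ n ∈ X, fN q p n).coeff β := rfl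
  have hG : (∑ X ∈ S, C X • ∏ n ∈ X, fN q p n).coeff β = 0 := by
    rw [AddMonoidAlgebra.coeff_sum, Finsupp.finset_sum_apply]
    apply Finset.sum_eq_zero
    intro X hX
    have hv : (∏ n ∈ X, fN q p n).coeff β = 0 := by
      by_contra hne
      have hmem := Finsupp.mem_support_iff.mpr hne
      have hb := (prod_fN_supp_bound q p X β hmem).2 j
      have hcard : X.card < (Wcell q).card := Finset.card_lt_card (hS X hX)
      have hcard' : (X.card : ℤ) < ((Wcell q).card : ℤ) := by exact_mod_cast hcard
      nlinarith [hb, hβj]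
    have hsm : (C X • ∏ n ∈ X, fN q p n).coeff β = C X • ((∏ n ∈ X, fN q p n).coeff β) :=
      AddMonoidAlgebra.coeff_smul_apply _ _ _
    rw [hsm, hv]
    simp
  rw [hre, hG, add_zero]
  exact Finsupp.mem_support_iff.mp hβ

end Stmt10Aux4

theorem stmt10 {d : ℕ} (hd : 1 ≤ d) (q : Fin d → ℕ) (hq : ∀ j, 1 ≤ q j)
    (p : LMv d) (hp : p ≠ 0)
    (S : Finset (Finset (Fin d → ℤ))) (hS : ∀ X ∈ S, X ⊂ Wcell q)
    (C : Finset (Fin d → ℤ) → ℂ)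
    (hinv : ∀ n ∈ Wcell q, scaleZF (muV q n) (Ptilde q p S C) = Ptilde q p S C)
    (P : LMvF d) (hP : stretchF q P = Ptilde q p S C) :
    (∀ β ∈ Finsupp.support (Rcal q p P).coeff, (∀ j, 0 ≤ β.1 j) ∧ 0 ≤ β.2) ∧
    ¬ (MvPolynomial.X (Sum.inr ()) ∣ toMvP (Rcal q p P)) ∧
    (∀ j : Fin d, ¬ (MvPolynomial.X (Sum.inl j) ∣ toMvP (Rcal q p P))) := by
  classical
  have hcardW : (Wcell q).card = ∏ j, q j := Wcell_card q
  have hqdvd : ∀ j, q j * ((∏ i, q i) / q j) = ∏ i, q i := fun j =>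
    Nat.mul_div_cancel' (Finset.dvd_prod_of_mem q (Finset.mem_univ j))
  have hqpos : ∀ j, (0:ℤ) < (q j : ℤ) := fun j => by exact_mod_cast hq j
  have hPapply : ∀ (α : Fin d →₀ ℤ) (k : ℤ),
      P.coeff (α, k) = (Ptilde q p S C).coeff (stretchE q α, k) := by
    intro α k; rw [← hP, stretchF_apply q hq]
  have hQQj : ∀ j, ((∏ i, q i : ℕ) : ℤ) = (q j : ℤ) * (((∏ i, q i) / q j : ℕ) : ℤ) := by
    intro j
    rw [← Nat.cast_mul, hqdvd j]
  have hPsupp : ∀ β ∈ P.coeff.support, ((0:ℤ) ≤ β.2 ∧ β.2 ≤ ((∏ j, q j : ℕ) : ℤ)) ∧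
      ∀ j, -(gammaV p j) * (((∏ i, q i) / q j : ℕ) : ℤ) ≤ β.1 j := by
    intro β hβ
    have hne : (Ptilde q p S C).coeff (stretchE q β.1, β.2) ≠ 0 := by
      rw [← hPapply]
      simpa using Finsupp.mem_support_iff.mp hβ
    have hb := Ptilde_supp_bound q p S hS C _ (Finsupp.mem_support_iff.mpr hne)
    constructor
    · have := hb.1
      rw [hcardW] at this
      exact this
    · intro j
      have h1 := hb.2 j
      rw [hcardW] at h1
      have h2 : (stretchE q β.1, β.2).1 j = (q j : ℤ) * β.1 j := stretchE_apply q β.1 j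
      rw [h2] at h1
      have h3 : (q j : ℤ) * (-(gammaV p j) * (((∏ i, q i) / q j : ℕ) : ℤ))
          ≤ (q j : ℤ) * β.1 j := by
        rw [show (q j : ℤ) * (-(gammaV p j) * (((∏ i, q i) / q j : ℕ) : ℤ))
            = -(gammaV p j) * ((q j : ℤ) * (((∏ i, q i) / q j : ℕ) : ℤ)) by ring,
          ← hQQj j]
        exact h1
      exact le_of_mul_le_mul_left h3 (hqpos j)
  have hP0Q : P.coeff (0, ((∏ j, q j : ℕ) : ℤ)) = (-1)^(∏ j, q j : ℕ) := by
    rw [hPapply, stretchE_zero]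
    have := Ptilde_coeff_top q p S hS C
    rw [hcardW] at this
    exact this
  have hPwit : ∀ j, 0 < gammaV p j → ∃ β ∈ P.coeff.support,
      β.1 j = -(gammaV p j) * (((∏ i, q i) / q j : ℕ) : ℤ) := by
    intro j hγ
    obtain ⟨β, hβ, hβj⟩ := Ptilde_exists_min q p S hS C j hγ
    have hst : β ∈ (stretchF q P).coeff.support := by rw [hP]; exact hβ
    have h2 := Finsupp.mapDomain_support
      (f := fun β : (Fin d →₀ ℤ) × ℤ => (stretchE q β.1, β.2)) hst
    rw [Finset.mem_image] at h2
    obtain ⟨β', hβ', hβ'eq⟩ := h2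
    refine ⟨β', hβ', ?_⟩
    have hfst : stretchE q β'.1 = β.1 := congrArg Prod.fst hβ'eq
    have h3 : (q j : ℤ) * β'.1 j = β.1 j := by rw [← stretchE_apply, hfst]
    have h4 : (q j : ℤ) * β'.1 j
        = (q j : ℤ) * (-(gammaV p j) * (((∏ i, q i) / q j : ℕ) : ℤ)) := by
      rw [h3, hβj, hcardW]
      rw [show (q j : ℤ) * (-(gammaV p j) * (((∏ i, q i) / q j : ℕ) : ℤ))
          = -(gammaV p j) * ((q j : ℤ) * (((∏ i, q i) / q j : ℕ) : ℤ)) by ring, ← hQQj j]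
    exact mul_left_cancel₀ (ne_of_gt (hqpos j)) h4
  have goal1 : ∀ β ∈ (Rcal q p P).coeff.support, (∀ j, 0 ≤ β.1 j) ∧ 0 ≤ β.2 := by
    intro β hβ
    have hne := Finsupp.mem_support_iff.mp hβ
    rw [Rcal_apply] at hne
    have hb := hPsupp _ (Finsupp.mem_support_iff.mpr hne)
    constructor
    · intro j
      have h2 := hb.2 j
      have h3 : (β.1 - gammaQE q p, ((∏ j, q j : ℕ) : ℤ) - β.2).1 j
          = β.1 j - gammaQE q p j := Finsupp.sub_apply _ _ _
      rw [h3, gammaQE_apply] at h2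
      linarith
    · have h1 := hb.1.2
      simp only at h1
      linarith
  have hβstar : ((gammaQE q p, (0:ℤ)) : (Fin d →₀ ℤ) × ℤ) ∈ (Rcal q p P).coeff.support := by
    rw [Finsupp.mem_support_iff, Rcal_apply]
    simp only [sub_self, sub_zero]
    rw [hP0Q]
    exact pow_ne_zero _ (neg_ne_zero.mpr one_ne_zero)
  refine ⟨goal1, ?_, ?_⟩
  · apply X_not_dvd_of_coeff _ _
      (Finsupp.equivFunOnFinite.symm
        (Sum.elim (fun j => ((gammaQE q p, (0:ℤ)).1 j).toNat)
          (fun _ => ((gammaQE q p, (0:ℤ)).2).toNat)))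
    · rw [Finsupp.coe_equivFunOnFinite_symm]
      simp
    · rw [toMvP_coeff goal1 _ hβstar, Rcal_apply]
      simp only [sub_self, sub_zero]
      rw [hP0Q]
      exact pow_ne_zero _ (neg_ne_zero.mpr one_ne_zero)
  · intro j
    rcases eq_or_lt_of_le (gammaV_nonneg p j) with hγ | hγ
    · apply X_not_dvd_of_coeff _ _
        (Finsupp.equivFunOnFinite.symm
          (Sum.elim (fun j => ((gammaQE q p, (0:ℤ)).1 j).toNat)
            (fun _ => ((gammaQE q p, (0:ℤ)).2).toNat)))
      · rw [Finsupp.coe_equivFunOnFinite_symm]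
        simp only [Sum.elim_inl]
        rw [gammaQE_apply, ← hγ]
        simp
      · rw [toMvP_coeff goal1 _ hβstar, Rcal_apply]
        simp only [sub_self, sub_zero]
        rw [hP0Q]
        exact pow_ne_zero _ (neg_ne_zero.mpr one_ne_zero)
    · obtain ⟨β', hβ', hβ'j⟩ := hPwit j hγ
      set βR : (Fin d →₀ ℤ) × ℤ := (β'.1 + gammaQE q p, ((∏ j, q j : ℕ) : ℤ) - β'.2)
        with hβR
      have hmem : βR ∈ (Rcal q p P).coeff.support := by
        rw [Finsupp.mem_support_iff, Rcal_apply]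
        have hfst : βR.1 - gammaQE q p = β'.1 := by
          rw [hβR]; simp
        have hsnd : ((∏ j, q j : ℕ) : ℤ) - βR.2 = β'.2 := by
          rw [hβR]; simp
        rw [hfst, hsnd]
        simpa using Finsupp.mem_support_iff.mp hβ'
      apply X_not_dvd_of_coeff _ _
        (Finsupp.equivFunOnFinite.symm
          (Sum.elim (fun i => (βR.1 i).toNat) (fun _ => (βR.2).toNat)))
      · rw [Finsupp.coe_equivFunOnFinite_symm]
        simp only [Sum.elim_inl]
        have : βR.1 j = 0 := by
          rw [hβR]
          simp only [Finsupp.add_apply]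
          rw [hβ'j, gammaQE_apply]
          ring
        rw [this]
        simp
      · rw [toMvP_coeff goal1 _ hmem]
        exact Finsupp.mem_support_iff.mp hmem
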